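/- KL divergence drop decomposes over islands: for any distributions p, r on X, D(p‖r) − D(Gp‖Gr) = Σ_{c∈L(G)} p(c) [D(p^c‖r^c) − D(Gp^c‖Gr^c)]. -/

import Mathlib

open Finset Real

def isDist {X : Type*} [Fintype X] (p : X → ℝ) : Prop :=
  (∀ x, 0 ≤ p x) ∧ ∑ x, p x = 1

def isStoch {X : Type*} [Fintype X] (G : X → X → ℝ) : Prop :=
  (∀ y x, 0 ≤ G y x) ∧ ∀ x, ∑ y, G y x = 1

def push {X : Type*} [Fintype X] (G : X → X → ℝ) (p : X → ℝ) : X → ℝ :=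
  fun y => ∑ x, G y x * p x

noncomputable def KL {X : Type*} [Fintype X] (p q : X → ℝ) : ℝ :=
  ∑ x, p x * Real.log (p x / q x)

noncomputable def Ent {X : Type*} [Fintype X] (p : X → ℝ) : ℝ :=
  -∑ x, p x * Real.log (p x)

noncomputable def cost {X : Type*} [Fintype X] (G : X → X → ℝ) (f : X → ℝ) (p : X → ℝ) : ℝ :=
  Ent (push G p) - Ent p + ∑ x, p x * f x

open scoped Classical

/-- Two states are related iff they can both send probability to a common output. -/
def islandRel {X : Type*} [Fintype X] (G : X → X → ℝ) : X → X → Prop :=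
  fun a b => ∃ y, 0 < G y a ∧ 0 < G y b

/-- The island decomposition: the setoid generated by `islandRel G`. -/
def islandSetoid {X : Type*} [Fintype X] (G : X → X → ℝ) : Setoid X :=
  Relation.EqvGen.setoid (islandRel G)

/-- The probability mass of `p` within the island `c`. -/
noncomputable def islandMass {X : Type*} [Fintype X] (G : X → X → ℝ) (p : X → ℝ)
    (c : Quotient (islandSetoid G)) : ℝ :=
  ∑ x ∈ Finset.univ.filter (fun x => Quotient.mk (islandSetoid G) x = c), p x

/-- The conditional distribution of `p` within the island `c`
(zero outside `c`, and zero everywhere when `p(c) = 0`, by the `x/0 = 0` convention). -/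
noncomputable def islandCond {X : Type*} [Fintype X] (G : X → X → ℝ) (p : X → ℝ)
    (c : Quotient (islandSetoid G)) : X → ℝ :=
  fun x => if Quotient.mk (islandSetoid G) x = c then p x / islandMass G p c else 0


section AuxIsland

open Finset Real
open scoped Classical

variable {X : Type*} [Fintype X]

lemma island_eq_of_common (G : X → X → ℝ) {a b y : X} (ha : 0 < G y a) (hb : 0 < G y b) :
    Quotient.mk (islandSetoid G) a = Quotient.mk (islandSetoid G) b :=
  Quotient.sound (Relation.EqvGen.rel _ _ ⟨y, ha, hb⟩)

/-- The island to which an output `y` belongs (i.e. the common island of all inputs that can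
reach `y`); junk value `⟦y⟧` if nothing reaches `y`. -/
noncomputable def outIsland (G : X → X → ℝ) (y : X) : Quotient (islandSetoid G) :=
  if h : ∃ x, 0 < G y x then Quotient.mk _ h.choose else Quotient.mk _ y

lemma outIsland_eq (G : X → X → ℝ) {y x : X} (hx : 0 < G y x) :
    outIsland G y = Quotient.mk (islandSetoid G) x := by
  have h : ∃ x, 0 < G y x := ⟨x, hx⟩
  rw [outIsland, dif_pos h]
  exact island_eq_of_common G h.choose_spec hx

lemma push_eq_island {G : X → X → ℝ} (hG : isStoch G) (p : X → ℝ) {y : X}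
    {c : Quotient (islandSetoid G)} (hy : outIsland G y = c) :
    push G p y = ∑ x ∈ Finset.univ.filter (fun x => Quotient.mk (islandSetoid G) x = c),
      G y x * p x := by
  rw [push]
  symm
  apply Finset.sum_subset (Finset.filter_subset _ _)
  intro x _ hx
  simp only [mem_filter, mem_univ, true_and] at hx
  rcases (hG.1 y x).lt_or_eq with h | h
  · exact absurd ((outIsland_eq G h).symm.trans hy) hx
  · rw [← h, zero_mul]

lemma push_cond_eq (G : X → X → ℝ) (p : X → ℝ) (c : Quotient (islandSetoid G)) (y : X) :
    push G (islandCond G p c) y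
      = (∑ x ∈ Finset.univ.filter (fun x => Quotient.mk (islandSetoid G) x = c), G y x * p x)
        / islandMass G p c := by
  simp only [push, islandCond, mul_ite, mul_zero, Finset.sum_div, Finset.sum_filter]
  exact Finset.sum_congr rfl fun x _ => by split <;> simp [mul_div_assoc]

lemma push_cond_zero {G : X → X → ℝ} (hG : isStoch G) (p : X → ℝ)
    {c : Quotient (islandSetoid G)} {y : X} (hy : outIsland G y ≠ c) :
    push G (islandCond G p c) y = 0 := by
  rw [push_cond_eq]
  convert zero_div _
  apply Finset.sum_eq_zero
  intro x hx
  simp only [mem_filter, mem_univ, true_and] at hx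
  rcases (hG.1 y x).lt_or_eq with h | h
  · exact absurd ((outIsland_eq G h).trans hx) hy
  · rw [← h, zero_mul]

lemma sum_push_fiber {G : X → X → ℝ} (hG : isStoch G) (p : X → ℝ)
    (c : Quotient (islandSetoid G)) :
    ∑ y ∈ Finset.univ.filter (fun y => outIsland G y = c), push G p y = islandMass G p c := by
  calc ∑ y ∈ Finset.univ.filter (fun y => outIsland G y = c), push G p y
      = ∑ y ∈ Finset.univ.filter (fun y => outIsland G y = c),
          ∑ x ∈ Finset.univ.filter (fun x => Quotient.mk (islandSetoid G) x = c),
            G y x * p x := by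
        refine Finset.sum_congr rfl fun y hy => ?_
        simp only [mem_filter, mem_univ, true_and] at hy
        exact push_eq_island hG p hy
    _ = ∑ x ∈ Finset.univ.filter (fun x => Quotient.mk (islandSetoid G) x = c),
          (∑ y ∈ Finset.univ.filter (fun y => outIsland G y = c), G y x) * p x := by
        rw [Finset.sum_comm]
        exact Finset.sum_congr rfl fun x _ => (Finset.sum_mul _ _ _).symm
    _ = islandMass G p c := by
        refine Finset.sum_congr rfl fun x hx => ?_
        simp only [mem_filter, mem_univ, true_and] at hx
        have h1 : ∑ y ∈ Finset.univ.filter (fun y => outIsland G y = c), G y x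
            = ∑ y, G y x := by
          apply Finset.sum_subset (Finset.filter_subset _ _)
          intro y _ hy
          simp only [mem_filter, mem_univ, true_and] at hy
          rcases (hG.1 y x).lt_or_eq with h | h
          · exact absurd ((outIsland_eq G h).trans hx) hy
          · exact h.symm
        rw [h1, hG.2 x, one_mul]

lemma kl_term_split {a b mp mr : ℝ} (ha : 0 ≤ a) (hb : 0 ≤ b) (hab : b = 0 → a = 0)
    (hmp : 0 < mp) (hmr : 0 < mr) :
    a * Real.log (a / b) = mp * ((a / mp) * Real.log ((a / mp) / (b / mr)))
      + a * (Real.log mp - Real.log mr) := by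
  rcases ha.eq_or_lt with h | h
  · simp [← h]
  · have hb' : 0 < b := hb.lt_of_ne (fun e => h.ne' (hab e.symm))
    have h1 : (a / mp) / (b / mr) = (a / b) * (mr / mp) := by
      field_simp
    rw [h1, Real.log_mul (div_ne_zero h.ne' hb'.ne') (div_ne_zero hmr.ne' hmp.ne'),
      Real.log_div hmr.ne' hmp.ne']
    field_simp
    ring

end AuxIsland

/-- the KL-divergence drop decomposes over islands:
`D(p‖r) − D(Gp‖Gr) = Σ_c p(c) [D(p^c‖r^c) − D(Gp^c‖Gr^c)]`
(under absolute-continuity assumptions ensuring all divergences are finite). -/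
theorem kl_drop_island_decomposition {X : Type*} [Fintype X]
    (G : X → X → ℝ) (hG : isStoch G)
    (p r : X → ℝ) (hp : isDist p) (hr : isDist r)
    (hmass : ∀ c : Quotient (islandSetoid G), 0 < islandMass G p c → 0 < islandMass G r c)
    (hac : ∀ x, r x = 0 → p x = 0)
    (hacG : ∀ y, push G r y = 0 → push G p y = 0) :
    KL p r - KL (push G p) (push G r) =
      ∑ c : Quotient (islandSetoid G),
        islandMass G p c *
          (KL (islandCond G p c) (islandCond G r c)
            - KL (push G (islandCond G p c)) (push G (islandCond G r c))) := by
  classical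
  -- fiberwise decomposition of both KL divergences
  have h1 : KL p r = ∑ c : Quotient (islandSetoid G),
      ∑ x ∈ Finset.univ.filter (fun x => Quotient.mk (islandSetoid G) x = c),
        p x * Real.log (p x / r x) := by
    rw [KL, ← Finset.sum_fiberwise Finset.univ (fun x => Quotient.mk (islandSetoid G) x)]
  have h2 : KL (push G p) (push G r) = ∑ c : Quotient (islandSetoid G),
      ∑ y ∈ Finset.univ.filter (fun y => outIsland G y = c),
        push G p y * Real.log (push G p y / push G r y) := by
    rw [KL, ← Finset.sum_fiberwise Finset.univ (fun y => outIsland G y)]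
  rw [h1, h2, ← Finset.sum_sub_distrib]
  refine Finset.sum_congr rfl fun c _ => ?_
  have hmp0 : 0 ≤ islandMass G p c := Finset.sum_nonneg fun x _ => hp.1 x
  rcases hmp0.eq_or_lt with hmp | hmp
  · -- trivial island: p(c) = 0
    have hpz : ∀ x ∈ Finset.univ.filter
        (fun x => Quotient.mk (islandSetoid G) x = c), p x = 0 :=
      (Finset.sum_eq_zero_iff_of_nonneg fun x _ => hp.1 x).mp hmp.symm
    have hA : ∑ x ∈ Finset.univ.filter (fun x => Quotient.mk (islandSetoid G) x = c),
        p x * Real.log (p x / r x) = 0 :=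
      Finset.sum_eq_zero fun x hx => by rw [hpz x hx, zero_mul]
    have hB : ∑ y ∈ Finset.univ.filter (fun y => outIsland G y = c),
        push G p y * Real.log (push G p y / push G r y) = 0 := by
      refine Finset.sum_eq_zero fun y hy => ?_
      simp only [Finset.mem_filter, Finset.mem_univ, true_and] at hy
      have : push G p y = 0 := by
        rw [push_eq_island hG p hy]
        exact Finset.sum_eq_zero fun x hx => by rw [hpz x hx, mul_zero]
      rw [this, zero_mul]
    rw [hA, hB, ← hmp, zero_mul, sub_zero]
  · -- main case: p(c) > 0
    have hmr : 0 < islandMass G r c := hmass c hmp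
    set mp := islandMass G p c with hmpdef
    set mr := islandMass G r c with hmrdef
    -- input side
    have hKLc : KL (islandCond G p c) (islandCond G r c)
        = ∑ x ∈ Finset.univ.filter (fun x => Quotient.mk (islandSetoid G) x = c),
            (p x / mp) * Real.log ((p x / mp) / (r x / mr)) := by
      rw [KL]
      rw [← Finset.sum_filter_of_ne (p := fun x => Quotient.mk (islandSetoid G) x = c)
        (f := fun x => islandCond G p c x * Real.log (islandCond G p c x / islandCond G r c x))
        (fun x _ hx => by
          by_contra hc
          exact hx (by simp [islandCond, hc]))]
      refine Finset.sum_congr rfl fun x hx => ?_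
      simp only [Finset.mem_filter, Finset.mem_univ, true_and] at hx
      simp [islandCond, hx]
      rfl
    have hA : ∑ x ∈ Finset.univ.filter (fun x => Quotient.mk (islandSetoid G) x = c),
        p x * Real.log (p x / r x)
        = mp * KL (islandCond G p c) (islandCond G r c)
          + mp * (Real.log mp - Real.log mr) := by
      have : ∀ x ∈ Finset.univ.filter (fun x => Quotient.mk (islandSetoid G) x = c),
          p x * Real.log (p x / r x)
            = mp * ((p x / mp) * Real.log ((p x / mp) / (r x / mr)))
              + p x * (Real.log mp - Real.log mr) :=
        fun x _ => kl_term_split (hp.1 x) (hr.1 x) (hac x) hmp hmr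
      rw [Finset.sum_congr rfl this, Finset.sum_add_distrib, ← Finset.mul_sum,
        ← Finset.sum_mul, hKLc]
      rfl
    -- output side
    have hKLGc : KL (push G (islandCond G p c)) (push G (islandCond G r c))
        = ∑ y ∈ Finset.univ.filter (fun y => outIsland G y = c),
            (push G p y / mp) * Real.log ((push G p y / mp) / (push G r y / mr)) := by
      rw [KL]
      rw [← Finset.sum_filter_of_ne (p := fun y => outIsland G y = c)
        (f := fun y => push G (islandCond G p c) y
          * Real.log (push G (islandCond G p c) y / push G (islandCond G r c) y))
        (fun y _ hy => by
          by_contra hc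
          exact hy (by simp only [push_cond_zero hG p hc, zero_mul]))]
      refine Finset.sum_congr rfl fun y hy => ?_
      simp only [Finset.mem_filter, Finset.mem_univ, true_and] at hy
      rw [push_cond_eq, push_cond_eq, ← push_eq_island hG p hy, ← push_eq_island hG r hy]
    have hB : ∑ y ∈ Finset.univ.filter (fun y => outIsland G y = c),
        push G p y * Real.log (push G p y / push G r y)
        = mp * KL (push G (islandCond G p c)) (push G (islandCond G r c))
          + mp * (Real.log mp - Real.log mr) := by
      have : ∀ y ∈ Finset.univ.filter (fun y => outIsland G y = c),
          push G p y * Real.log (push G p y / push G r y)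
            = mp * ((push G p y / mp) * Real.log ((push G p y / mp) / (push G r y / mr)))
              + push G p y * (Real.log mp - Real.log mr) :=
        fun y _ => kl_term_split
          (Finset.sum_nonneg fun x _ => mul_nonneg (hG.1 y x) (hp.1 x))
          (Finset.sum_nonneg fun x _ => mul_nonneg (hG.1 y x) (hr.1 x))
          (hacG y) hmp hmr
      rw [Finset.sum_congr rfl this, Finset.sum_add_distrib, ← Finset.mul_sum,
        ← Finset.sum_mul, hKLGc, sum_push_fiber hG p]
    rw [hA, hB]
    ring
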